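/- In the model M of the critical multi-cubic lattice, the operation Δ satisfies: (1) Δ(p,p) = p for all p; (2) if p ≤ q then Δ(q,p) ≤ q; (3) if p ≤ q then Δ(q, Δ(q,p)) = p; (4) if p ≤ q ≤ r then Δ(r,p) ≤ Δ(r,q); (5) if p ≤ q then Δ(q,p) = q if and only if p = q. -/

import Mathlib

/-- The order on the model `I → Option V` of the critical multi-cubic lattice:
`p ≤ q` iff at every index `q` is the indeterminate `X` (= `none`) or agrees with `p`. -/
def MCLle {I V : Type*} (p q : I → Option V) : Prop := ∀ i, q i = none ∨ q i = p i

/-- The paper's operation `Δ(q, p)` on the model of the critical multi-cubic lattice over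
`ZMod n`: negate the coordinate of `p` wherever `q` is indeterminate (`none`), and keep
the coordinate of `p` otherwise. -/
def MCLdelta {I : Type*} {n : ℕ} (q p : I → Option {a : ZMod n // a ≠ 0}) :
    I → Option {a : ZMod n // a ≠ 0} := fun i =>
  match q i with
  | none => (p i).map fun v => Subtype.mk (-(v.val)) (fun h => v.property (neg_eq_zero.mp h))
  | some _ => p i

lemma MCLdelta_none {I : Type*} {n : ℕ} {q p : I → Option {a : ZMod n // a ≠ 0}} {i : I}
    (h : q i = none) : MCLdelta q p i =
      (p i).map fun v => Subtype.mk (-(v.val)) (fun h => v.property (neg_eq_zero.mp h)) := by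
  simp [MCLdelta, h]

lemma MCLdelta_some {I : Type*} {n : ℕ} {q p : I → Option {a : ZMod n // a ≠ 0}} {i : I}
    {a} (h : q i = some a) : MCLdelta q p i = p i := by
  simp [MCLdelta, h]

/-- In the model `M = I → Option {a : ZMod (2k+1) // a ≠ 0}` of the critical
multi-cubic lattice, `Δ` satisfies: (1) `Δ(p,p) = p`; (2) if `p ≤ q` then `Δ(q,p) ≤ q`;
(3) if `p ≤ q` then `Δ(q, Δ(q,p)) = p`; (4) if `p ≤ q ≤ r` then `Δ(r,p) ≤ Δ(r,q)`;
(5) if `p ≤ q` then `Δ(q,p) = q ↔ p = q`. -/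
theorem stmt_16 (I : Type*) (k : ℕ) (hk : 1 ≤ k) :
    (∀ p : I → Option {a : ZMod (2 * k + 1) // a ≠ 0}, MCLdelta p p = p) ∧
    (∀ p q : I → Option {a : ZMod (2 * k + 1) // a ≠ 0},
      MCLle p q → MCLle (MCLdelta q p) q) ∧
    (∀ p q : I → Option {a : ZMod (2 * k + 1) // a ≠ 0},
      MCLle p q → MCLdelta q (MCLdelta q p) = p) ∧
    (∀ p q r : I → Option {a : ZMod (2 * k + 1) // a ≠ 0},
      MCLle p q → MCLle q r → MCLle (MCLdelta r p) (MCLdelta r q)) ∧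
    (∀ p q : I → Option {a : ZMod (2 * k + 1) // a ≠ 0},
      MCLle p q → (MCLdelta q p = q ↔ p = q)) := by
  refine ⟨?_, ?_, ?_, ?_, ?_⟩
  · intro p
    funext i
    cases h : p i with
    | none => rw [MCLdelta_none h, h]; rfl
    | some a => rw [MCLdelta_some h]; exact h
  · intro p q hpq i
    cases h : q i with
    | none => exact Or.inl rfl
    | some a =>
      right
      rw [MCLdelta_some h]
      rcases hpq i with h' | h'
      · rw [h] at h'; exact absurd h' (by simp)
      · rw [← h', h]
  · intro p q hpq
    funext i
    cases h : q i with
    | none =>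
      rw [MCLdelta_none h, MCLdelta_none h, Option.map_map]
      cases p i with
      | none => rfl
      | some v => exact congrArg some (Subtype.ext (neg_neg _))
    | some a => rw [MCLdelta_some h, MCLdelta_some h]
  · intro p q r hpq hqr i
    cases h : r i with
    | none =>
      rw [MCLdelta_none h]
      cases hq : q i with
      | none => exact Or.inl (by simp [hq])
      | some a =>
        right
        rcases hpq i with h' | h'
        · rw [hq] at h'; exact absurd h' (by simp)
        · rw [MCLdelta_none h, ← h', hq]
    | some a =>
      rw [MCLdelta_some h, MCLdelta_some h]
      exact hpq i
  · intro p q hpq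
    constructor
    · intro hd
      funext i
      cases h : q i with
      | none =>
        have := congrFun hd i
        rw [MCLdelta_none h, h] at this
        exact Option.map_eq_none_iff.mp this
      | some a =>
        have := congrFun hd i
        rw [MCLdelta_some h] at this
        exact this.trans h
    · rintro rfl
      funext i
      cases h : p i with
      | none => rw [MCLdelta_none h, h]; rfl
      | some a => rw [MCLdelta_some h]; exact h
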